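/- Let A be a unital C*-algebra and u ∈ A. If ‖u u* + x x*‖ = 1 + ‖x‖² for every x ∈ A with ‖x‖ = 1, then u u* = 1 (u is a coisometry). -/

import Mathlib

lemma my_norm_one_add {A : Type*} [CStarAlgebra A] [PartialOrder A] [StarOrderedRing A]
    [Nontrivial A] {b : A} (hb : 0 ≤ b) : ‖(1 : A) + b‖ = 1 + ‖b‖ := by
  refine le_antisymm ((norm_add_le _ _).trans (by simp)) ?_
  have h1 : ‖b‖ ∈ spectrum ℝ b := CStarAlgebra.norm_mem_spectrum_of_nonneg hb
  have h2 : (1 : ℝ) + ‖b‖ ∈ spectrum ℝ ((1 : A) + b) := by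
    have := spectrum.singleton_add_eq (R := ℝ) b 1
    rw [map_one] at this
    rw [← this]
    exact Set.add_mem_add rfl h1
  calc 1 + ‖b‖ ≤ ‖(1 : ℝ) + ‖b‖‖ := by simpa using le_abs_self _
    _ ≤ ‖(1 : A) + b‖ := spectrum.norm_le_norm_of_mem h2

theorem stmt4 {A : Type*} [CStarAlgebra A] (u : A)
    (h : ∀ x : A, ‖x‖ = 1 → ‖u * star u + x * star x‖ = 1 + ‖x‖ ^ 2) :
    u * star u = 1 := by
  nontriviality A
  letI := CStarAlgebra.spectralOrder A
  letI := CStarAlgebra.spectralOrderedRing A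
  set a := u * star u with ha_def
  have ha : (0 : A) ≤ a := mul_star_self_nonneg u
  -- step 1 : ‖a‖ = 1
  have h1 : ‖a + 1‖ = 2 := by
    have := h 1 (by simp)
    simp only [mul_one, star_one, norm_one, one_pow] at this
    linarith [this]
  have hna : ‖a‖ = 1 := by
    have h2 : ‖(1 : A) + a‖ = 1 + ‖a‖ := my_norm_one_add ha
    rw [add_comm] at h1
    rw [h1] at h2
    linarith
  -- step 2 : a ≤ 1
  have hle : a ≤ 1 := by
    have := IsSelfAdjoint.le_algebraMap_norm_self (a := a) ha.isSelfAdjoint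
    rwa [hna, map_one] at this
  -- step 3 : contradiction if a ≠ 1
  by_contra hne
  have hc : (0 : A) ≤ 1 - a := sub_nonneg.mpr hle
  set t := ‖(1 : A) - a‖ with ht_def
  have ht : 0 < t := by
    rw [ht_def, norm_pos_iff]
    intro h0
    exact hne (by rwa [sub_eq_zero, eq_comm] at h0)
  have ht1 : t ≤ 1 := by
    have h1a : (1 : A) - a ≤ 1 := by
      calc (1 : A) - a ≤ 1 - 0 := by exact sub_le_sub_left ha 1
        _ = 1 := sub_zero 1
    have := CStarAlgebra.norm_le_norm_of_nonneg_of_le hc h1a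
    simpa using this
  set s := CFC.sqrt ((1 : A) - a) with hs_def
  have hs_nonneg : (0 : A) ≤ s := CFC.sqrt_nonneg _
  have hs_sq : s * star s = 1 - a := by
    rw [hs_nonneg.isSelfAdjoint.star_eq, ← sq, CFC.sq_sqrt _ hc]
  have hs_norm : ‖s‖ ^ 2 = t := by
    rw [ht_def, ← hs_sq, CStarRing.norm_self_mul_star, sq]
  have hs_pos : 0 < ‖s‖ := by nlinarith [norm_nonneg s]
  set x := (‖s‖ : ℂ)⁻¹ • s with hx_def
  have hx_norm : ‖x‖ = 1 := by
    rw [hx_def, norm_smul, norm_inv, Complex.norm_real, norm_norm,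
      inv_mul_cancel₀ hs_pos.ne']
  have hxx : x * star x = (t⁻¹ : ℝ) • ((1 : A) - a) := by
    rw [hx_def, star_smul, smul_mul_smul_comm, star_inv₀, Complex.star_def,
      Complex.conj_ofReal, hs_sq, ← mul_inv, ← Complex.ofReal_mul, ← sq, hs_norm]
    rw [← Complex.ofReal_inv, Complex.coe_smul]
  have key := h x hx_norm
  rw [hx_norm, hxx, one_pow] at key
  -- rewrite a + t⁻¹ • (1 - a) = 1 + (t⁻¹ - 1) • (1 - a)
  have hrw : a + (t⁻¹ : ℝ) • ((1 : A) - a) = 1 + (t⁻¹ - 1 : ℝ) • ((1 : A) - a) := by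
    rw [sub_smul, one_smul]
    abel
  have hcoef : (0 : ℝ) ≤ t⁻¹ - 1 := by
    have : (1 : ℝ) ≤ t⁻¹ := (one_le_inv_iff₀).mpr ⟨ht, ht1⟩
    linarith
  have hbnn : (0 : A) ≤ (t⁻¹ - 1 : ℝ) • ((1 : A) - a) := smul_nonneg hcoef hc
  have hnorm2 : ‖a + (t⁻¹ : ℝ) • ((1 : A) - a)‖ = 2 - t := by
    rw [hrw, my_norm_one_add hbnn, norm_smul, Real.norm_eq_abs,
      abs_of_nonneg hcoef, ← ht_def]
    field_simp
    ring
  rw [hnorm2] at key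
  linarith
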